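/- Let f = Xⁿ + a_{n−1}X^{n−1} + ⋯ + a₁X + a₀ ∈ ℍ[X] be monic with n ≥ 1. Then every r ∈ ℍ with f(r) = 0, and every r ∈ ℍ with f′(r) = 0, satisfies all of: ‖r‖ < √(1 + ‖a_{n−1}‖² + ⋯ + ‖a₀‖²); ‖r‖ < 1 + max_{0 ≤ k ≤ n−1} ‖aₖ‖; and ‖r‖ ≤ max{1, ‖a_{n−1}‖ + ⋯ + ‖a₀‖}. -/

import Mathlib

open Polynomial

lemma cauchy_key (m : ℕ) (hm : 1 ≤ m) (t : ℝ) (ht : 0 ≤ t)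
    (c : ℕ → ℝ) (hc : ∀ k, 0 ≤ c k)
    (h : t ^ m ≤ ∑ k ∈ Finset.range m, c k * t ^ k)
    (S M B : ℝ) (hM0 : 0 ≤ M)
    (hS : ∑ k ∈ Finset.range m, c k ≤ S)
    (hM : ∀ k < m, c k ≤ M)
    (hB : ∑ k ∈ Finset.range m, c k ^ 2 ≤ B) :
    t < Real.sqrt (1 + B) ∧ t < 1 + M ∧ t ≤ max 1 S := by
  have hgeom : ∀ x : ℝ, (x - 1) * ∑ k ∈ Finset.range m, x ^ k = x ^ m - 1 := fun x => by
    rw [mul_comm, geom_sum_mul]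
  have hB0 : 0 ≤ B := le_trans (Finset.sum_nonneg fun k _ => sq_nonneg _) hB
  refine ⟨?_, ?_, ?_⟩
  · by_contra hcon
    push_neg at hcon
    have h1 : 1 + B ≤ t ^ 2 := by
      have := mul_self_le_mul_self (Real.sqrt_nonneg _) hcon
      rwa [Real.mul_self_sqrt (by linarith), ← sq] at this
    have hcs := Finset.sum_mul_sq_le_sq_mul_sq (Finset.range m) c (fun k => t ^ k)
    have h2 : (t ^ m) ^ 2 ≤ (∑ k ∈ Finset.range m, c k * t ^ k) ^ 2 :=
      pow_le_pow_left₀ (pow_nonneg ht m) h 2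
    have h3 : ∑ k ∈ Finset.range m, (t ^ k) ^ 2 = ∑ k ∈ Finset.range m, (t ^ 2) ^ k := by
      refine Finset.sum_congr rfl fun k _ => ?_
      rw [← pow_mul, ← pow_mul, mul_comm]
    have hsnn : 0 ≤ ∑ k ∈ Finset.range m, (t ^ 2) ^ k :=
      Finset.sum_nonneg fun k _ => pow_nonneg (sq_nonneg t) k
    have h4 : (t ^ m) ^ 2 ≤ B * ∑ k ∈ Finset.range m, (t ^ 2) ^ k := by
      calc (t ^ m) ^ 2 ≤ (∑ k ∈ Finset.range m, c k ^ 2) * ∑ k ∈ Finset.range m, (t ^ k) ^ 2 :=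
            le_trans h2 hcs
        _ ≤ B * ∑ k ∈ Finset.range m, (t ^ 2) ^ k := by
            rw [h3]; exact mul_le_mul_of_nonneg_right hB hsnn
    have h5 : B * ∑ k ∈ Finset.range m, (t ^ 2) ^ k ≤ (t ^ 2 - 1) * ∑ k ∈ Finset.range m, (t ^ 2) ^ k :=
      mul_le_mul_of_nonneg_right (by linarith) hsnn
    have h6 := hgeom (t ^ 2)
    have h7 : (t ^ 2) ^ m = (t ^ m) ^ 2 := by rw [← pow_mul, ← pow_mul, mul_comm]
    nlinarith [h4, h5, h6, h7]
  · by_contra hcon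
    push_neg at hcon
    rcases eq_or_lt_of_le hM0 with hM0' | hM0'
    · have hz : ∑ k ∈ Finset.range m, c k * t ^ k = 0 := by
        refine Finset.sum_eq_zero fun k hk => ?_
        have : c k = 0 := le_antisymm (hM0' ▸ hM k (Finset.mem_range.mp hk)) (hc k)
        rw [this, zero_mul]
      have ht1 : (1 : ℝ) ≤ t := by linarith
      nlinarith [one_le_pow₀ ht1 (n := m), h, hz]
    · have ht1 : 1 < t := by linarith
      have hsnn : 0 ≤ ∑ k ∈ Finset.range m, t ^ k :=
        Finset.sum_nonneg fun k _ => pow_nonneg ht k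
      have h2 : ∑ k ∈ Finset.range m, c k * t ^ k ≤ M * ∑ k ∈ Finset.range m, t ^ k := by
        rw [Finset.mul_sum]
        exact Finset.sum_le_sum fun k hk =>
          mul_le_mul_of_nonneg_right (hM k (Finset.mem_range.mp hk)) (pow_nonneg ht k)
      have h3 : M * ∑ k ∈ Finset.range m, t ^ k ≤ (t - 1) * ∑ k ∈ Finset.range m, t ^ k :=
        mul_le_mul_of_nonneg_right (by linarith) hsnn
      have h4 := hgeom t
      linarith
  · by_contra hcon
    push_neg at hcon
    rw [max_lt_iff] at hcon
    obtain ⟨h1, hSt⟩ := hcon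
    have h2 : ∑ k ∈ Finset.range m, c k * t ^ k ≤ S * t ^ (m - 1) := by
      calc ∑ k ∈ Finset.range m, c k * t ^ k ≤ ∑ k ∈ Finset.range m, c k * t ^ (m - 1) :=
            Finset.sum_le_sum fun k hk => mul_le_mul_of_nonneg_left
              (pow_le_pow_right₀ (le_of_lt h1) (by have := Finset.mem_range.mp hk; omega)) (hc k)
        _ = (∑ k ∈ Finset.range m, c k) * t ^ (m - 1) := by rw [Finset.sum_mul]
        _ ≤ S * t ^ (m - 1) := mul_le_mul_of_nonneg_right hS (pow_nonneg ht _)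
    have h3 : S * t ^ (m - 1) < t * t ^ (m - 1) :=
      mul_lt_mul_of_pos_right hSt (pow_pos (by linarith) _)
    have h4 : t * t ^ (m - 1) = t ^ m := by
      rw [← pow_succ']; congr 1; omega
    linarith

/- Corollary 4.13 (specialized to ℍ): Cauchy-type bounds on the roots and the
critical points of a monic polynomial `f = Xⁿ + a_{n−1}X^{n−1} + ⋯ + a₀`,
`n ≥ 1`, over `ℍ`. -/
theorem roots_and_critical_points_bounds
    (f : Polynomial (Quaternion ℝ)) (hmonic : f.Monic) (hn : 1 ≤ f.natDegree)
    (r : Quaternion ℝ)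
    (hr : Polynomial.eval r f = 0 ∨ Polynomial.eval r (derivative f) = 0) :
    ‖r‖ < Real.sqrt (1 + ∑ k ∈ Finset.range f.natDegree, ‖f.coeff k‖ ^ 2) ∧
    ‖r‖ < 1 + (Finset.range f.natDegree).sup'
        (Finset.nonempty_range_iff.mpr (by omega)) (fun k => ‖f.coeff k‖) ∧
    ‖r‖ ≤ max 1 (∑ k ∈ Finset.range f.natDegree, ‖f.coeff k‖) := by
  have hne : (Finset.range f.natDegree).Nonempty := Finset.nonempty_range_iff.mpr (by omega)
  set M : ℝ := (Finset.range f.natDegree).sup' hne (fun k => ‖f.coeff k‖) with hMdef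
  have hM0 : 0 ≤ M :=
    le_trans (norm_nonneg (f.coeff 0))
      (Finset.le_sup' (fun k => ‖f.coeff k‖) (Finset.mem_range.mpr (show 0 < f.natDegree by omega)))
  rcases hr with hr | hr
  · -- root case
    have hev := eval_eq_sum_range (p := f) r
    rw [hr, Finset.sum_range_succ, hmonic.coeff_natDegree, one_mul] at hev
    have hrn : r ^ f.natDegree = -∑ i ∈ Finset.range f.natDegree, f.coeff i * r ^ i :=
      eq_neg_of_add_eq_zero_right hev.symm
    have hnorm : ‖r‖ ^ f.natDegree ≤ ∑ k ∈ Finset.range f.natDegree, ‖f.coeff k‖ * ‖r‖ ^ k := by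
      calc ‖r‖ ^ f.natDegree = ‖r ^ f.natDegree‖ := (norm_pow r _).symm
        _ = ‖∑ i ∈ Finset.range f.natDegree, f.coeff i * r ^ i‖ := by rw [hrn, norm_neg]
        _ ≤ ∑ k ∈ Finset.range f.natDegree, ‖f.coeff k * r ^ k‖ := norm_sum_le _ _
        _ = ∑ k ∈ Finset.range f.natDegree, ‖f.coeff k‖ * ‖r‖ ^ k := by
            refine Finset.sum_congr rfl fun k _ => ?_; rw [norm_mul, norm_pow]
    exact cauchy_key f.natDegree hn ‖r‖ (norm_nonneg r) _ (fun k => norm_nonneg _) hnorm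
      _ M _ hM0 le_rfl
      (fun k hk => Finset.le_sup' (fun j => ‖f.coeff j‖) (Finset.mem_range.mpr hk)) le_rfl
  · -- critical point case
    obtain ⟨m, hm⟩ : ∃ m, f.natDegree = m + 1 := ⟨f.natDegree - 1, by omega⟩
    have hd : (derivative f).natDegree < m + 1 := hm ▸ natDegree_derivative_lt (by omega)
    have hev := eval_eq_sum_range' hd r
    rw [hr] at hev
    simp only [coeff_derivative] at hev
    rw [Finset.sum_range_succ] at hev
    have hc : f.coeff (m + 1) = 1 := by rw [← hm]; exact hmonic.coeff_natDegree
    rw [hc, one_mul] at hev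
    have hrn : ((m + 1 : ℕ) : Quaternion ℝ) * r ^ m
        = -∑ i ∈ Finset.range m, f.coeff (i + 1) * (↑i + 1) * r ^ i := by
      have := eq_neg_of_add_eq_zero_right hev.symm
      push_cast
      exact this
    have hm1 : 1 ≤ m := by
      by_contra hm1
      have hm0 : m = 0 := by omega
      subst hm0
      simp only [Finset.range_zero, Finset.sum_empty, neg_zero, pow_zero, mul_one] at hrn
      norm_num at hrn
    have hpos : (0 : ℝ) < (m : ℝ) + 1 := by positivity
    have hnorm : ((m : ℝ) + 1) * ‖r‖ ^ m
        ≤ ∑ k ∈ Finset.range m, ((k : ℝ) + 1) * ‖f.coeff (k + 1)‖ * ‖r‖ ^ k := by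
      calc ((m : ℝ) + 1) * ‖r‖ ^ m = ‖((m + 1 : ℕ) : Quaternion ℝ) * r ^ m‖ := by
            rw [norm_mul, norm_pow, ← Quaternion.coe_natCast, Quaternion.norm_coe,
              Real.norm_natCast]; push_cast; ring
        _ = ‖∑ i ∈ Finset.range m, f.coeff (i + 1) * (↑i + 1) * r ^ i‖ := by rw [hrn, norm_neg]
        _ ≤ ∑ k ∈ Finset.range m, ‖f.coeff (k + 1) * (↑k + 1) * r ^ k‖ := norm_sum_le _ _
        _ = ∑ k ∈ Finset.range m, ((k : ℝ) + 1) * ‖f.coeff (k + 1)‖ * ‖r‖ ^ k := by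
            refine Finset.sum_congr rfl fun k _ => ?_
            rw [norm_mul, norm_mul, norm_pow]
            have : ‖((k : ℕ) + 1 : Quaternion ℝ)‖ = (k : ℝ) + 1 := by
              rw [show ((k : ℕ) + 1 : Quaternion ℝ) = (((k + 1 : ℕ) : ℝ) : Quaternion ℝ) by
                push_cast; ring, Quaternion.norm_coe, Real.norm_natCast]; push_cast; ring
            rw [this]; ring
    set c : ℕ → ℝ := fun k => ((k : ℝ) + 1) / ((m : ℝ) + 1) * ‖f.coeff (k + 1)‖ with hcdef
    have hcnn : ∀ k, 0 ≤ c k := fun k => by positivity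
    have hkey : ‖r‖ ^ m ≤ ∑ k ∈ Finset.range m, c k * ‖r‖ ^ k := by
      refine (mul_le_mul_iff_right₀ hpos).mp ?_
      calc ((m : ℝ) + 1) * ‖r‖ ^ m
          ≤ ∑ k ∈ Finset.range m, ((k : ℝ) + 1) * ‖f.coeff (k + 1)‖ * ‖r‖ ^ k := hnorm
        _ = ((m : ℝ) + 1) * ∑ k ∈ Finset.range m, c k * ‖r‖ ^ k := by
            rw [Finset.mul_sum]
            refine Finset.sum_congr rfl fun k _ => ?_
            rw [hcdef]; field_simp
    have hcb : ∀ k, k ≤ m → c k ≤ ‖f.coeff (k + 1)‖ := fun k hk => by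
      have hk' : (k : ℝ) ≤ (m : ℝ) := Nat.cast_le.mpr hk
      have h1 : ((k : ℝ) + 1) / ((m : ℝ) + 1) ≤ 1 := (div_le_one hpos).mpr (by linarith)
      calc c k ≤ 1 * ‖f.coeff (k + 1)‖ := mul_le_mul_of_nonneg_right h1 (norm_nonneg _)
        _ = ‖f.coeff (k + 1)‖ := one_mul _
    have hS : ∑ k ∈ Finset.range m, c k ≤ ∑ k ∈ Finset.range f.natDegree, ‖f.coeff k‖ := by
      rw [hm, Finset.sum_range_succ']
      have : ∑ k ∈ Finset.range m, c k ≤ ∑ k ∈ Finset.range m, ‖f.coeff (k + 1)‖ :=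
        Finset.sum_le_sum fun k hk => hcb k (le_of_lt (Finset.mem_range.mp hk))
      have h0 : (0 : ℝ) ≤ ‖f.coeff 0‖ := norm_nonneg _
      linarith
    have hB : ∑ k ∈ Finset.range m, c k ^ 2 ≤ ∑ k ∈ Finset.range f.natDegree, ‖f.coeff k‖ ^ 2 := by
      rw [hm, Finset.sum_range_succ']
      have : ∑ k ∈ Finset.range m, c k ^ 2 ≤ ∑ k ∈ Finset.range m, ‖f.coeff (k + 1)‖ ^ 2 :=
        Finset.sum_le_sum fun k hk =>
          pow_le_pow_left₀ (hcnn k) (hcb k (le_of_lt (Finset.mem_range.mp hk))) 2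
      have h0 : (0 : ℝ) ≤ ‖f.coeff 0‖ ^ 2 := sq_nonneg _
      linarith
    have hMc : ∀ k < m, c k ≤ M := fun k hk =>
      le_trans (hcb k (le_of_lt hk))
        (Finset.le_sup' (fun j => ‖f.coeff j‖) (Finset.mem_range.mpr (by omega)))
    exact cauchy_key m hm1 ‖r‖ (norm_nonneg r) c hcnn hkey _ M _ hM0 hS hMc hB
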